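/- For n > 1 and d an odd prime, any function ĝ : (Z/d)^{2n} → Z/d whose restriction to every Lagrangian subspace is linear is itself a linear functional on (Z/d)^{2n}. -/

import Mathlib

set_option maxHeartbeats 1000000


open Matrix

/-- The phase space `(ℤ/d)^{2n}` as pairs `(a_X, a_Z)`. -/
abbrev PS (d n : ℕ) := (Fin n → ZMod d) × (Fin n → ZMod d)

/-- `ω = exp(2πi/d)`. -/
noncomputable def omegaC (d : ℕ) : ℂ := Complex.exp (2 * Real.pi * Complex.I / d)

/-- `ω^k` for an exponent `k : ℤ/d`. -/
noncomputable def chi (d : ℕ) (k : ZMod d) : ℂ := omegaC d ^ k.val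

/-- Dot product over `ℤ/d`. -/
def dotZ {d n : ℕ} (x y : Fin n → ZMod d) : ZMod d := ∑ i, x i * y i

/-- The standard symplectic form `[a,b] = a_X·b_Z − b_X·a_Z`. -/
def symp {d n : ℕ} (a b : PS d n) : ZMod d := dotZ a.1 b.2 - dotZ b.1 a.2

/-- The Weyl-Heisenberg operator `T(a) = τ^{-a_X·a_Z} ⨂ᵢ Z^{(a_Z)_i} X^{(a_X)_i}`,
where `τ = ω^{(d+1)/2} = ω^{2⁻¹ mod d}` for odd `d`. -/
noncomputable def WH (d n : ℕ) (a : PS d n) :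
    Matrix (Fin n → ZMod d) (Fin n → ZMod d) ℂ :=
  Matrix.of fun q q' =>
    if q = q' + a.1 then chi d ((2⁻¹ : ZMod d) * (-(dotZ a.1 a.2)) + dotZ a.2 q) else 0

/-- An isotropic subspace of dimension `n`, i.e. a Lagrangian subspace. -/
def IsLagrangian (d n : ℕ) (L : Submodule (ZMod d) (PS d n)) : Prop :=
  (∀ a ∈ L, ∀ b ∈ L, symp a b = 0) ∧ Module.finrank (ZMod d) L = n

section lemmas
variable {d n : ℕ}

lemma dotZ_add_left (x y z : Fin n → ZMod d) : dotZ (x + y) z = dotZ x z + dotZ y z := by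
  simp [dotZ, add_mul, Finset.sum_add_distrib]

lemma dotZ_add_right (x y z : Fin n → ZMod d) : dotZ x (y + z) = dotZ x y + dotZ x z := by
  simp [dotZ, mul_add, Finset.sum_add_distrib]

lemma dotZ_smul_left (c : ZMod d) (x y : Fin n → ZMod d) : dotZ (c • x) y = c * dotZ x y := by
  simp [dotZ, Finset.mul_sum, mul_assoc]

lemma dotZ_smul_right (c : ZMod d) (x y : Fin n → ZMod d) : dotZ x (c • y) = c * dotZ x y := by
  simp [dotZ, Finset.mul_sum]; apply Finset.sum_congr rfl; intros; ring

lemma symp_add_left (a b c : PS d n) : symp (a + b) c = symp a c + symp b c := by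
  simp [symp, dotZ_add_left, dotZ_add_right]; ring

lemma symp_add_right (a b c : PS d n) : symp a (b + c) = symp a b + symp a c := by
  simp [symp, dotZ_add_left, dotZ_add_right]; ring

lemma symp_smul_left (c : ZMod d) (a b : PS d n) : symp (c • a) b = c * symp a b := by
  simp [symp, dotZ_smul_left, dotZ_smul_right, mul_sub]

lemma symp_smul_right (c : ZMod d) (a b : PS d n) : symp a (c • b) = c * symp a b := by
  simp [symp, dotZ_smul_left, dotZ_smul_right, mul_sub]

lemma symp_self (a : PS d n) : symp a a = 0 := by simp [symp]

lemma symp_anti (a b : PS d n) : symp a b = - symp b a := by simp [symp]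

lemma dotZ_single (x : Fin n → ZMod d) (i : Fin n) : dotZ x (Pi.single i 1) = x i := by
  simp [dotZ, Pi.single_apply, mul_ite, Finset.sum_ite_eq']

/-- symp as a bilinear form. -/
def Sform (d n : ℕ) : LinearMap.BilinForm (ZMod d) (PS d n) :=
  LinearMap.mk₂ (ZMod d) symp symp_add_left
    (fun c a b => by rw [symp_smul_left]; rfl)
    symp_add_right (fun c a b => by rw [symp_smul_right]; rfl)

@[simp] lemma Sform_apply (a b : PS d n) : Sform d n a b = symp a b := rfl

lemma Sform_isAlt : (Sform d n).IsAlt := fun a => symp_self a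

lemma Sform_isRefl : (Sform d n).IsRefl := (Sform_isAlt).isRefl

lemma Sform_nondeg [Fact d.Prime] : (Sform d n).Nondegenerate := by
  apply (LinearMap.IsRefl.nondegenerate_iff_separatingLeft (B := Sform d n) Sform_isRefl).mpr
  intro x hx
  ext i
  · have := hx ((0 : Fin n → ZMod d), Pi.single i 1)
    simp only [Sform_apply, symp, dotZ_single] at this
    simpa [dotZ] using this
  · have := hx (Pi.single i 1, (0 : Fin n → ZMod d))
    simp only [Sform_apply, symp, dotZ_single] at this
    have h2 : dotZ (Pi.single i 1) x.2 = x.2 i := by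
      simp [dotZ, Pi.single_apply, ite_mul, Finset.sum_ite_eq']
    rw [h2] at this
    simpa [dotZ] using this

end lemmas

section lag
variable {d n : ℕ} [Fact d.Prime]

instance : Finite (Submodule (ZMod d) (PS d n)) :=
  Finite.of_injective (fun M => (M : Set (PS d n))) SetLike.coe_injective

lemma finrank_PS : Module.finrank (ZMod d) (PS d n) = 2 * n := by
  rw [Module.finrank_prod, Module.finrank_pi]
  simp [two_mul]

lemma exists_lagrangian_pair (x y : PS d n) (hxy : symp x y = 0) :
    ∃ L, IsLagrangian d n L ∧ x ∈ L ∧ y ∈ L := by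
  classical
  set U : Submodule (ZMod d) (PS d n) := Submodule.span (ZMod d) {x, y} with hU
  have hUiso : ∀ a ∈ U, ∀ b ∈ U, symp a b = 0 := by
    intro a ha b hb
    refine Submodule.span_induction₂ (p := fun a b _ _ => symp a b = 0)
      ?_ ?_ ?_ ?_ ?_ ?_ ?_ ha hb
    · intro u v hu hv
      simp only [Set.mem_insert_iff, Set.mem_singleton_iff] at hu hv
      rcases hu with rfl | rfl <;> rcases hv with rfl | rfl
      · exact symp_self _
      · exact hxy
      · rw [symp_anti, hxy, neg_zero]
      · exact symp_self _
    · intro v _; simp [symp, dotZ]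
    · intro u _; simp [symp, dotZ]
    · intro u₁ u₂ v _ _ _ h1 h2; rw [symp_add_left, h1, h2, add_zero]
    · intro u v₁ v₂ _ _ _ h1 h2; rw [symp_add_right, h1, h2, add_zero]
    · intro t u v _ _ h; rw [symp_smul_left, h, mul_zero]
    · intro t u v _ _ h; rw [symp_smul_right, h, mul_zero]
  set S : Set (Submodule (ZMod d) (PS d n)) :=
    {M | U ≤ M ∧ ∀ a ∈ M, ∀ b ∈ M, symp a b = 0} with hS
  have hSfin : S.Finite := Set.toFinite S
  have hSne : S.Nonempty := ⟨U, le_refl U, hUiso⟩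
  obtain ⟨M, hMS, hmax⟩ : ∃ M ∈ S, ∀ M' ∈ S, id M ≤ id M' → id M = id M' := by
    obtain ⟨M, hM⟩ := hSfin.exists_maximal hSne
    exact ⟨M, hM.1, fun M' h1 h2 => le_antisymm h2 (hM.2 h1 h2)⟩
  have hMiso := hMS.2
  -- orthogonal M ≤ M
  have horth : (Sform d n).orthogonal M ≤ M := by
    intro v hv
    have hvM : ∀ u ∈ M, symp u v = 0 := fun u hu => hv u hu
    have hM' : (M ⊔ Submodule.span (ZMod d) {v}) ∈ S := by
      constructor
      · exact le_trans hMS.1 le_sup_left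
      · intro a ha b hb
        rw [Submodule.mem_sup] at ha hb
        obtain ⟨m1, hm1, r1, hr1, rfl⟩ := ha
        obtain ⟨m2, hm2, r2, hr2, rfl⟩ := hb
        rw [Submodule.mem_span_singleton] at hr1 hr2
        obtain ⟨s1, rfl⟩ := hr1
        obtain ⟨s2, rfl⟩ := hr2
        have h1 : symp v m2 = 0 := by rw [symp_anti, hvM m2 hm2, neg_zero]
        rw [symp_add_left, symp_add_right, symp_add_right, symp_smul_left,
          symp_smul_right, symp_smul_right, symp_smul_left, hMiso m1 hm1 m2 hm2, symp_self,
          hvM m1 hm1, h1]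
        ring
    have := hmax _ hM' le_sup_left
    simp only [id] at this
    rw [this]
    exact Submodule.mem_sup_right (Submodule.mem_span_singleton_self v)
  have hle : M ≤ (Sform d n).orthogonal M := by
    intro u hu
    intro w hw
    exact hMiso w hw u hu
  have heq : (Sform d n).orthogonal M = M := le_antisymm horth hle
  have hfr := LinearMap.BilinForm.finrank_orthogonal (Sform_nondeg) M
  rw [heq, finrank_PS] at hfr
  have hle2 : Module.finrank (ZMod d) M ≤ 2 * n := by
    rw [← finrank_PS (d := d) (n := n)]
    exact Submodule.finrank_le M
  refine ⟨M, ⟨hMiso, by omega⟩, ?_, ?_⟩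
  · exact hMS.1 (Submodule.subset_span (by simp))
  · exact hMS.1 (Submodule.subset_span (by simp))
end lag

section main
variable {d n : ℕ} [Fact d.Prime]

lemma two_ne_zero'' (hodd : Odd d) : (2 : ZMod d) ≠ 0 := by
  haveI : NeZero d := ⟨(Fact.out : d.Prime).ne_zero⟩
  intro h
  have h2 : ((2 : ℕ) : ZMod d) = 0 := by exact_mod_cast h
  rw [ZMod.natCast_eq_zero_iff] at h2
  have := ((Nat.prime_dvd_prime_iff_eq (Fact.out : d.Prime) Nat.prime_two).mp h2)
  subst this
  exact (Nat.not_odd_iff_even.mpr (by norm_num)) hodd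

lemma exists_helpers (hn : 1 < n) (hodd : Odd d) (a b : PS d n) (hl : symp a b ≠ 0) :
    ∃ c e : PS d n, symp a c = 0 ∧ symp b e = 0 ∧ symp c e = 0 ∧
      symp (a + c) (b + e) = 0 ∧ symp (a + b) (c + e) = 0 := by
  haveI : NeZero d := ⟨(Fact.out : d.Prime).ne_zero⟩
  set lam := symp a b with hlam
  -- Step 1: find u, v in the symplectic complement of {a,b} with symp u v ≠ 0
  have step1 : ∃ u v : PS d n, symp a u = 0 ∧ symp b u = 0 ∧ symp a v = 0 ∧ symp b v = 0 ∧
      symp u v ≠ 0 := by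
    by_contra hcon
    push_neg at hcon
    -- then the map x ↦ (symp a x, symp b x) is injective
    have hinj : Function.Injective
        (fun x : PS d n => (symp a x, symp b x)) := by
      have hker : ∀ x : PS d n, symp a x = 0 → symp b x = 0 → x = 0 := by
        intro x hax hbx
        apply (Sform_nondeg (d := d) (n := n)).1 x
        intro y
        simp only [Sform_apply]
        set p : PS d n := (-(symp b y) * lam⁻¹) • a + (symp a y * lam⁻¹) • b with hp
        have hap : symp a p = symp a y := by
          rw [hp, symp_add_right, symp_smul_right, symp_smul_right, symp_self, ← hlam]
          field_simp
          simp
        have hbp : symp b p = symp b y := by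
          have hba : symp b a = -lam := by rw [symp_anti, hlam]
          rw [hp, symp_add_right, symp_smul_right, symp_smul_right, symp_self, hba]
          field_simp
          simp
        have hw1 : symp a (y - p) = 0 := by
          rw [sub_eq_add_neg, symp_add_right, ← neg_one_smul (ZMod d) p, symp_smul_right, hap]
          ring
        have hw2 : symp b (y - p) = 0 := by
          rw [sub_eq_add_neg, symp_add_right, ← neg_one_smul (ZMod d) p, symp_smul_right, hbp]
          ring
        have hxw : symp x (y - p) = 0 := hcon x (y - p) hax hbx hw1 hw2
        have hxp : symp x p = 0 := by
          have hxa : symp x a = 0 := by rw [symp_anti, hax, neg_zero]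
          have hxb : symp x b = 0 := by rw [symp_anti, hbx, neg_zero]
          rw [hp, symp_add_right, symp_smul_right, symp_smul_right, hxa, hxb]
          ring
        have : symp x y = symp x p + symp x (y - p) := by
          rw [← symp_add_right]
          congr 1
          abel
        rw [this, hxw, hxp, add_zero]
      intro x y hxy
      simp only [Prod.mk.injEq] at hxy
      have h1 : symp a (x - y) = 0 := by
        rw [sub_eq_add_neg, symp_add_right, ← neg_one_smul (ZMod d) y, symp_smul_right, hxy.1]
        ring
      have h2 : symp b (x - y) = 0 := by
        rw [sub_eq_add_neg, symp_add_right, ← neg_one_smul (ZMod d) y, symp_smul_right, hxy.2]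
        ring
      have := hker _ h1 h2
      exact sub_eq_zero.mp this
    have hcard := Fintype.card_le_of_injective _ hinj
    rw [Fintype.card_prod, Fintype.card_prod, Fintype.card_fun, ZMod.card] at hcard
    have hd1 : 1 < d := (Fact.out : d.Prime).one_lt
    have hdn : d < d ^ n := by
      calc d = d ^ 1 := (pow_one d).symm
      _ < d ^ n := Nat.pow_lt_pow_right hd1 hn
    have : d * d < d ^ n * d ^ n :=
      Nat.mul_lt_mul_of_lt_of_lt hdn hdn
    simp [Fintype.card_fin] at hcard
    omega
  obtain ⟨u, v, hau, hbu, hav, hbv, hs⟩ := step1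
  set s := symp u v with hsv
  have h2 : (2 : ZMod d) ≠ 0 := two_ne_zero'' hodd
  refine ⟨(-(2 : ZMod d)⁻¹) • a + (-(lam * (2 : ZMod d)⁻¹ * (2 : ZMod d)⁻¹ * s⁻¹)) • u,
    (-(2 : ZMod d)⁻¹) • b + v, ?_, ?_, ?_, ?_, ?_⟩
  -- precomputed reversed zeros
  all_goals {
    clear_value lam s
    have hua : symp u a = 0 := by rw [symp_anti, hau, neg_zero]
    have hub : symp u b = 0 := by rw [symp_anti, hbu, neg_zero]
    have hva : symp v a = 0 := by rw [symp_anti, hav, neg_zero]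
    have hvb : symp v b = 0 := by rw [symp_anti, hbv, neg_zero]
    have hba : symp b a = -lam := by rw [symp_anti, hlam]
    have h2i : (2 : ZMod d) * (2 : ZMod d)⁻¹ = 1 := mul_inv_cancel₀ h2
    have hsi : s * s⁻¹ = 1 := mul_inv_cancel₀ hs
    simp only [symp_add_left, symp_add_right, symp_smul_left, symp_smul_right,
      symp_self, hau, hbu, hav, hbv, hua, hub, hva, hvb, hba, ← hlam, ← hsv]
    try ring
    try linear_combination (-(lam * (2:ZMod d)⁻¹ * (2:ZMod d)⁻¹)) * hsi
    try linear_combination (-lam) * h2i + (-(lam * (2:ZMod d)⁻¹ * (2:ZMod d)⁻¹)) * hsi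
  }

end main

/-- For `n > 1` and `d` an odd prime, a function `ĝ : (ℤ/d)^{2n} → ℤ/d` whose
restriction to every Lagrangian subspace is linear is globally linear. -/
theorem linear_on_lagrangians_is_linear (d n : ℕ) [Fact d.Prime] (hodd : Odd d)
    (hn : 1 < n) (gh : PS d n → ZMod d)
    (hlin : ∀ L : Submodule (ZMod d) (PS d n), IsLagrangian d n L →
      (∀ a ∈ L, ∀ b ∈ L, gh (a + b) = gh a + gh b) ∧
      (∀ (c : ZMod d), ∀ a ∈ L, gh (c • a) = c * gh a)) :
    ∃ f : PS d n →ₗ[ZMod d] ZMod d, ∀ x, gh x = f x := by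
  have smul_all : ∀ (s : ZMod d) (x : PS d n), gh (s • x) = s * gh x := by
    intro s x
    obtain ⟨L, hL, hx, -⟩ := exists_lagrangian_pair x x (symp_self x)
    exact (hlin L hL).2 s x hx
  have add0 : ∀ x y : PS d n, symp x y = 0 → gh (x + y) = gh x + gh y := by
    intro x y h
    obtain ⟨L, hL, hx, hy⟩ := exists_lagrangian_pair x y h
    exact (hlin L hL).1 x hx y hy
  have add_all : ∀ x y : PS d n, gh (x + y) = gh x + gh y := by
    intro a b
    by_cases h : symp a b = 0
    · exact add0 a b h
    · obtain ⟨c, e, hac, hbe, hce, h4, h5⟩ := exists_helpers hn hodd a b h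
      have key1 : gh (a + c) = gh a + gh c := add0 _ _ hac
      have key2 : gh (b + e) = gh b + gh e := add0 _ _ hbe
      have key3 : gh ((a + c) + (b + e)) = gh (a + c) + gh (b + e) := add0 _ _ h4
      have key4 : gh (c + e) = gh c + gh e := add0 _ _ hce
      have key5 : gh ((a + b) + (c + e)) = gh (a + b) + gh (c + e) := add0 _ _ h5
      have hrearr : (a + b) + (c + e) = (a + c) + (b + e) := by abel
      have heq : gh (a + b) + (gh c + gh e) = gh a + gh c + (gh b + gh e) := by
        rw [← key4, ← key5, hrearr, key3, key1, key2]
      linear_combination heq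
  refine ⟨{ toFun := gh,
            map_add' := add_all,
            map_smul' := fun s x => by simp [smul_all, smul_eq_mul] }, fun x => rfl⟩
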